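/- Let n ≥ 2 be an integer, ε_j = e^{2πij/n}, and let s ≥ 0 and d ≥ 0 be integers. Then ∑_{j=1}^{n−1} |∑_{h=0}^{s−1} (h+1)^d ε_j^h| ≤ 2^{d+1} s^d n log n. -/

import Mathlib

open Finset

private lemma geom_bound (ε : ℂ) (h1 : ‖ε‖ = 1) (hne : ε ≠ 1) (k : ℕ) :
    ‖∑ h ∈ Finset.range k, ε ^ h‖ ≤ 2 / ‖1 - ε‖ := by
  have hpos : 0 < ‖1 - ε‖ := by
    rw [norm_pos_iff, sub_ne_zero]; exact fun h => hne h.symm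
  rw [geom_sum_eq hne, norm_div, norm_sub_rev ε 1]
  gcongr
  calc ‖ε ^ k - 1‖ ≤ ‖ε ^ k‖ + ‖(1:ℂ)‖ := norm_sub_le _ _
    _ = 2 := by rw [norm_pow, h1]; norm_num

private lemma inner_bound (ε : ℂ) (h1 : ‖ε‖ = 1) (hne : ε ≠ 1) (s d : ℕ) :
    ‖∑ h ∈ Finset.range s, ((h : ℂ) + 1) ^ d * ε ^ h‖
      ≤ 2 ^ (d + 1) * (s : ℝ) ^ d / ‖1 - ε‖ := by
  have hpos : 0 < ‖1 - ε‖ := by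
    rw [norm_pos_iff, sub_ne_zero]; exact fun h => hne h.symm
  rcases Nat.eq_zero_or_pos s with hs | hs
  · subst hs; simp; positivity
  have hs1 : (1 : ℝ) ≤ (s : ℝ) := by exact_mod_cast hs
  cases d with
  | zero =>
      simp only [pow_zero, one_mul]
      calc ‖∑ h ∈ Finset.range s, ε ^ h‖ ≤ 2 / ‖1 - ε‖ := geom_bound ε h1 hne s
        _ ≤ 2 ^ (0 + 1) * (s : ℝ) ^ 0 / ‖1 - ε‖ := by norm_num
  | succ e =>
      have habel := Finset.sum_range_by_parts (fun h => ((h : ℂ) + 1) ^ (e + 1))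
        (fun h => ε ^ h) s
      simp only [smul_eq_mul] at habel
      rw [habel]
      refine (norm_sub_le _ _).trans ?_
      have hG : ∀ k : ℕ, ‖∑ i ∈ Finset.range k, ε ^ i‖ ≤ 2 / ‖1 - ε‖ :=
        fun k => geom_bound ε h1 hne k
      have hcast : (((s - 1 : ℕ) : ℝ)) + 1 = (s : ℝ) := by
        rw [Nat.cast_sub hs]; ring
      have hb1 : ‖(((s - 1 : ℕ) : ℂ) + 1) ^ (e + 1) * ∑ i ∈ Finset.range s, ε ^ i‖
          ≤ (s : ℝ) ^ (e + 1) * (2 / ‖1 - ε‖) := by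
        rw [norm_mul]
        have hf : ‖(((s - 1 : ℕ) : ℂ) + 1) ^ (e + 1)‖ = (s : ℝ) ^ (e + 1) := by
          rw [show (((s - 1 : ℕ) : ℂ) + 1) = (((((s - 1 : ℕ) : ℝ) + 1 : ℝ)) : ℂ) by
            push_cast; ring, norm_pow, Complex.norm_real,
            Real.norm_of_nonneg (by positivity), hcast]
        rw [hf]
        exact mul_le_mul_of_nonneg_left (hG s) (by positivity)
      have hb2 : ‖∑ i ∈ Finset.range (s - 1),
            ((((i + 1 : ℕ) : ℂ) + 1) ^ (e + 1) - ((i : ℂ) + 1) ^ (e + 1)) *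
              ∑ j ∈ Finset.range (i + 1), ε ^ j‖
          ≤ ((s : ℝ) ^ (e + 1) - 1) * (2 / ‖1 - ε‖) := by
        refine (norm_sum_le _ _).trans ?_
        have key : ∀ i ∈ Finset.range (s - 1),
            ‖((((i + 1 : ℕ) : ℂ) + 1) ^ (e + 1) - ((i : ℂ) + 1) ^ (e + 1)) *
              ∑ j ∈ Finset.range (i + 1), ε ^ j‖
            ≤ (((i : ℝ) + 2) ^ (e + 1) - ((i : ℝ) + 1) ^ (e + 1)) * (2 / ‖1 - ε‖) := by
          intro i _
          rw [norm_mul]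
          have hd : ‖(((i + 1 : ℕ) : ℂ) + 1) ^ (e + 1) - ((i : ℂ) + 1) ^ (e + 1)‖
              = ((i : ℝ) + 2) ^ (e + 1) - ((i : ℝ) + 1) ^ (e + 1) := by
            have heq : (((i + 1 : ℕ) : ℂ) + 1) ^ (e + 1) - ((i : ℂ) + 1) ^ (e + 1)
                = ((((i : ℝ) + 2) ^ (e + 1) - ((i : ℝ) + 1) ^ (e + 1) : ℝ) : ℂ) := by
              push_cast; ring
            have hmono : ((i : ℝ) + 1) ^ (e + 1) ≤ ((i : ℝ) + 2) ^ (e + 1) :=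
              pow_le_pow_left₀ (by positivity) (by linarith) _
            rw [heq, Complex.norm_real, Real.norm_of_nonneg (by linarith)]
          rw [hd]
          exact mul_le_mul_of_nonneg_left (hG (i + 1)) (by
            have hmono : ((i : ℝ) + 1) ^ (e + 1) ≤ ((i : ℝ) + 2) ^ (e + 1) :=
              pow_le_pow_left₀ (by positivity) (by linarith) _
            linarith)
        refine (Finset.sum_le_sum key).trans ?_
        rw [← Finset.sum_mul]
        have htel : ∑ i ∈ Finset.range (s - 1),
            (((i : ℝ) + 2) ^ (e + 1) - ((i : ℝ) + 1) ^ (e + 1))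
            = (s : ℝ) ^ (e + 1) - 1 := by
          rw [show ∑ i ∈ Finset.range (s - 1),
              (((i : ℝ) + 2) ^ (e + 1) - ((i : ℝ) + 1) ^ (e + 1))
              = ∑ i ∈ Finset.range (s - 1),
                ((((i + 1 : ℕ) : ℝ) + 1) ^ (e + 1) - (((i : ℕ) : ℝ) + 1) ^ (e + 1)) from
            Finset.sum_congr rfl (fun i _ => by push_cast; ring),
            Finset.sum_range_sub (fun i => ((i : ℝ) + 1) ^ (e + 1)) (s - 1), hcast]
          norm_num
        rw [htel]
      have hpow : (4 : ℝ) ≤ 2 ^ (e + 1 + 1) := by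
        calc (4 : ℝ) = 2 ^ 2 := by norm_num
          _ ≤ 2 ^ (e + 1 + 1) := by
            apply pow_le_pow_right₀ (by norm_num); omega
      have hsp : (1 : ℝ) ≤ (s : ℝ) ^ (e + 1) := one_le_pow₀ hs1
      refine (add_le_add hb1 hb2).trans ?_
      simp only [div_eq_mul_inv]
      have hinv : (0:ℝ) ≤ (‖1 - ε‖)⁻¹ := by positivity
      have t1 : (0:ℝ) ≤ (2 ^ (e + 1 + 1) - 4) * ((s : ℝ) ^ (e + 1)) * (‖1 - ε‖)⁻¹ :=
        mul_nonneg (mul_nonneg (by linarith) (by positivity)) hinv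
      have t2 : (0:ℝ) ≤ 2 * (‖1 - ε‖)⁻¹ := by positivity
      nlinarith [t1, t2]

private lemma norm_one_sub_exp (x : ℝ) :
    ‖(1 : ℂ) - Complex.exp ((x : ℂ) * Complex.I)‖ = 2 * |Real.sin (x / 2)| := by
  have hre : ((1 : ℂ) - Complex.exp ((x : ℂ) * Complex.I)).re = 1 - Real.cos x := by
    simp [Complex.exp_mul_I, Complex.cos_ofReal_re]
  have him : ((1 : ℂ) - Complex.exp ((x : ℂ) * Complex.I)).im = -Real.sin x := by
    simp [Complex.exp_mul_I, Complex.sin_ofReal_re]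
  rw [Complex.norm_def, Complex.normSq_apply, hre, him,
    Real.abs_sin_half]
  rw [show (1 - Real.cos x) * (1 - Real.cos x) + -Real.sin x * -Real.sin x
      = 4 * ((1 - Real.cos x) / 2) by
    have := Real.sin_sq_add_cos_sq x; nlinarith [this]]
  rw [show (4 : ℝ) = 2 ^ 2 by norm_num, Real.sqrt_mul (by positivity), Real.sqrt_sq (by norm_num)]

private lemma sin_lb (n k : ℕ) (hk1 : 1 ≤ k) (hk2 : 2 * k ≤ n) :
    2 * (k : ℝ) / n ≤ Real.sin (Real.pi * k / n) := by
  have hn : 0 < (n : ℝ) := by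
    have : 0 < n := by omega
    exact_mod_cast this
  have hk : (1 : ℝ) ≤ (k : ℝ) := by exact_mod_cast hk1
  have h2k : 2 * (k : ℝ) ≤ (n : ℝ) := by exact_mod_cast hk2
  have hx1 : 0 ≤ Real.pi * k / n := by positivity
  have hx2 : Real.pi * k / n ≤ Real.pi / 2 := by
    rw [div_le_div_iff₀ hn (by norm_num)]
    nlinarith [Real.pi_pos]
  have := Real.mul_le_sin hx1 hx2
  have heq : 2 / Real.pi * (Real.pi * k / n) = 2 * (k : ℝ) / n := by
    field_simp
  linarith [heq ▸ this]

private lemma inv_norm_bound (n j : ℕ) (hj1 : 1 ≤ j) (hjn : j < n) :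
    1 / ‖(1 : ℂ) - Complex.exp (((2 * Real.pi * j / n : ℝ) : ℂ) * Complex.I)‖
      ≤ (n : ℝ) / 4 * (1 / (j : ℝ) + 1 / ((n - j : ℕ) : ℝ)) := by
  have hn : 0 < (n : ℝ) := by
    have : 0 < n := by omega
    exact_mod_cast this
  have hj : (1 : ℝ) ≤ (j : ℝ) := by exact_mod_cast hj1
  have hcast : ((n - j : ℕ) : ℝ) = (n : ℝ) - (j : ℝ) := by
    rw [Nat.cast_sub hjn.le]
  have hnj1 : (1 : ℝ) ≤ ((n - j : ℕ) : ℝ) := by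
    have : 1 ≤ n - j := by omega
    exact_mod_cast this
  rw [norm_one_sub_exp, show (2 * Real.pi * j / n : ℝ) / 2 = Real.pi * j / n by ring]
  rcases le_or_gt (2 * j) n with h | h
  · have hs := sin_lb n j hj1 h
    have hspos : 0 < Real.sin (Real.pi * j / n) := lt_of_lt_of_le (by positivity) hs
    rw [abs_of_pos hspos]
    calc 1 / (2 * Real.sin (Real.pi * j / n)) ≤ 1 / (2 * (2 * (j : ℝ) / n)) := by
          apply one_div_le_one_div_of_le (by positivity)
          linarith
      _ = (n : ℝ) / 4 * (1 / (j : ℝ)) := by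
          field_simp
          ring
      _ ≤ (n : ℝ) / 4 * (1 / (j : ℝ) + 1 / ((n - j : ℕ) : ℝ)) := by
          have : (0:ℝ) ≤ 1 / ((n - j : ℕ) : ℝ) := by positivity
          nlinarith
  · have hk1 : 1 ≤ n - j := by omega
    have hk2 : 2 * (n - j) ≤ n := by omega
    have hs := sin_lb n (n - j) hk1 hk2
    have hsin : Real.sin (Real.pi * ((n - j : ℕ) : ℝ) / n) = Real.sin (Real.pi * j / n) := by
      rw [show Real.pi * ((n - j : ℕ) : ℝ) / n = Real.pi - Real.pi * j / n by
        rw [hcast]; field_simp, Real.sin_pi_sub]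
    rw [hsin] at hs
    have hspos : 0 < Real.sin (Real.pi * j / n) := lt_of_lt_of_le (by positivity) hs
    rw [abs_of_pos hspos]
    calc 1 / (2 * Real.sin (Real.pi * j / n)) ≤ 1 / (2 * (2 * ((n - j : ℕ) : ℝ) / n)) := by
          apply one_div_le_one_div_of_le (by positivity)
          linarith
      _ = (n : ℝ) / 4 * (1 / ((n - j : ℕ) : ℝ)) := by
          field_simp
          ring
      _ ≤ (n : ℝ) / 4 * (1 / (j : ℝ) + 1 / ((n - j : ℕ) : ℝ)) := by
          have : (0:ℝ) ≤ 1 / (j : ℝ) := by positivity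
          nlinarith

private lemma harmonic_bound (n : ℕ) (hn : 2 ≤ n) :
    ∑ j ∈ Finset.Ico 1 n, (1 : ℝ) / (j : ℝ) ≤ 2 * Real.log n := by
  have h1 : ∑ j ∈ Finset.Ico 1 n, (1 : ℝ) / (j : ℝ) = ((harmonic (n - 1) : ℚ) : ℝ) := by
    rw [Finset.sum_Ico_eq_sum_range, harmonic]
    push_cast
    refine Finset.sum_congr rfl fun i _ => ?_
    rw [one_div, add_comm 1 (i : ℝ)]
  rw [h1]
  refine (harmonic_le_one_add_log (n - 1)).trans ?_
  rcases eq_or_lt_of_le hn with h | h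
  · rw [← h]
    norm_num
    nlinarith [Real.log_two_gt_d9]
  · have hn3 : 3 ≤ n := h
    have hn3' : (3 : ℝ) ≤ (n : ℝ) := by exact_mod_cast hn3
    have hlog1 : (1 : ℝ) ≤ Real.log n := by
      rw [Real.le_log_iff_exp_le (by linarith)]
      nlinarith [Real.exp_one_lt_d9]
    have hlog2 : Real.log ((n - 1 : ℕ) : ℝ) ≤ Real.log n := by
      apply Real.log_le_log (by exact_mod_cast Nat.sub_pos_of_lt (by omega))
      exact_mod_cast Nat.sub_le n 1
    linarith

private lemma reflect_sum (n : ℕ) :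
    ∑ j ∈ Finset.Ico 1 n, (1 : ℝ) / ((n - j : ℕ) : ℝ)
      = ∑ j ∈ Finset.Ico 1 n, (1 : ℝ) / (j : ℝ) := by
  refine Finset.sum_nbij' (i := fun j => n - j) (j := fun j => n - j) ?_ ?_ ?_ ?_ ?_
  all_goals intro a ha <;> simp only [Finset.mem_Ico] at ha ⊢ <;> omega

theorem weighted_root_of_unity_sum_bound (n : ℕ) (hn : 2 ≤ n) (s d : ℕ) :
    ∑ j ∈ Finset.Ico 1 n,
      ‖∑ h ∈ Finset.range s,
        ((h : ℂ) + 1) ^ d * Complex.exp (2 * Real.pi * Complex.I * j / n) ^ h‖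
      ≤ 2 ^ (d + 1) * (s : ℝ) ^ d * n * Real.log n := by
  have hnR : (0 : ℝ) < n := by positivity
  have hrw : ∀ j : ℕ, Complex.exp (2 * Real.pi * Complex.I * j / n)
      = Complex.exp (((2 * Real.pi * j / n : ℝ) : ℂ) * Complex.I) := fun j => by
    congr 1; push_cast; ring
  have hnorm1 : ∀ j : ℕ, ‖Complex.exp (((2 * Real.pi * j / n : ℝ) : ℂ) * Complex.I)‖ = 1 :=
    fun j => by
      exact Complex.norm_exp_ofReal_mul_I _
  have hpos : ∀ j ∈ Finset.Ico 1 n,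
      0 < ‖(1 : ℂ) - Complex.exp (((2 * Real.pi * j / n : ℝ) : ℂ) * Complex.I)‖ := by
    intro j hj
    rw [Finset.mem_Ico] at hj
    have hj1 : (1 : ℝ) ≤ (j : ℝ) := by exact_mod_cast hj.1
    have hjn : (j : ℝ) < (n : ℝ) := by exact_mod_cast hj.2
    rw [norm_one_sub_exp, show (2 * Real.pi * j / n : ℝ) / 2 = Real.pi * j / n by ring]
    have hsin : 0 < Real.sin (Real.pi * j / n) := by
      apply Real.sin_pos_of_pos_of_lt_pi
      · apply div_pos (mul_pos Real.pi_pos (by linarith)) hnR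
      · rw [div_lt_iff₀ hnR]
        nlinarith [Real.pi_pos]
    rw [abs_of_pos hsin]; linarith
  have hne : ∀ j ∈ Finset.Ico 1 n,
      Complex.exp (((2 * Real.pi * j / n : ℝ) : ℂ) * Complex.I) ≠ 1 := by
    intro j hj hcontra
    have := hpos j hj
    rw [hcontra] at this
    simp at this
  calc ∑ j ∈ Finset.Ico 1 n,
      ‖∑ h ∈ Finset.range s,
        ((h : ℂ) + 1) ^ d * Complex.exp (2 * Real.pi * Complex.I * j / n) ^ h‖
      ≤ ∑ j ∈ Finset.Ico 1 n, 2 ^ (d + 1) * (s : ℝ) ^ d /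
          ‖(1 : ℂ) - Complex.exp (((2 * Real.pi * j / n : ℝ) : ℂ) * Complex.I)‖ := by
        apply Finset.sum_le_sum
        intro j hj
        rw [hrw j]
        exact inner_bound _ (hnorm1 j) (hne j hj) s d
    _ = 2 ^ (d + 1) * (s : ℝ) ^ d * ∑ j ∈ Finset.Ico 1 n,
          1 / ‖(1 : ℂ) - Complex.exp (((2 * Real.pi * j / n : ℝ) : ℂ) * Complex.I)‖ := by
        rw [Finset.mul_sum]
        exact Finset.sum_congr rfl fun j _ => (mul_one_div _ _).symm
    _ ≤ 2 ^ (d + 1) * (s : ℝ) ^ d * ∑ j ∈ Finset.Ico 1 n,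
          (n : ℝ) / 4 * (1 / (j : ℝ) + 1 / ((n - j : ℕ) : ℝ)) := by
        apply mul_le_mul_of_nonneg_left _ (by positivity)
        apply Finset.sum_le_sum
        intro j hj
        rw [Finset.mem_Ico] at hj
        exact inv_norm_bound n j hj.1 hj.2
    _ = 2 ^ (d + 1) * (s : ℝ) ^ d * ((n : ℝ) / 4 *
          ((∑ j ∈ Finset.Ico 1 n, 1 / (j : ℝ)) +
            ∑ j ∈ Finset.Ico 1 n, 1 / ((n - j : ℕ) : ℝ))) := by
        rw [← Finset.mul_sum, Finset.sum_add_distrib]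
    _ = 2 ^ (d + 1) * (s : ℝ) ^ d * ((n : ℝ) / 4 *
          (2 * ∑ j ∈ Finset.Ico 1 n, 1 / (j : ℝ))) := by
        rw [reflect_sum]; ring
    _ ≤ 2 ^ (d + 1) * (s : ℝ) ^ d * ((n : ℝ) / 4 * (2 * (2 * Real.log n))) := by
        gcongr
        exact harmonic_bound n hn
    _ = 2 ^ (d + 1) * (s : ℝ) ^ d * n * Real.log n := by ring
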